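/- Let (g, J, φ) be the pHQ-double extension of the 4-dimensional abelian pseudo-Hermitian Lie algebra ℝ^{2,2} (neutral metric of signature (2,2)) by means of D = F = 0 and some s₀ ∈ ℝ⁴. Then (g, J, φ) is equivalent to exactly one of: the 8-dimensional abelian pseudo-Hermitian Lie algebra ℝ^{4,4} (when s₀ = 0), the Lie algebra T*₀k (when s₀ ≠ 0 is isotropic), or one of T*_{θ₁}k, T*_{−θ₁}k (when φ(s₀,s₀) ≠ 0, the sign being the sign of φ(s₀,s₀)). -/

import Mathlib

open TensorProduct

/-- A pseudo-Hermitian quadratic Lie algebra structure on a real vector space `V`: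
`br` is a Lie bracket, `J` is an integrable complex structure, and `φ` is a
nondegenerate symmetric invariant bilinear form compatible with `J`. -/
structure IsPHQ (V : Type*) [AddCommGroup V] [Module ℝ V]
    (br : V → V → V) (J : V → V) (φ : V → V → ℝ) : Prop where
  br_add_left : ∀ x y z : V, br (x + y) z = br x z + br y z
  br_smul_left : ∀ (c : ℝ) (x z : V), br (c • x) z = c • br x z
  br_skew : ∀ x y : V, br x y = - br y x
  jacobi : ∀ x y z : V, br x (br y z) + br y (br z x) + br z (br x y) = 0
  J_add : ∀ x y : V, J (x + y) = J x + J y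
  J_smul : ∀ (c : ℝ) (x : V), J (c • x) = c • J x
  J_sq : ∀ x : V, J (J x) = - x
  integrable : ∀ x y : V, br x y + J (br (J x) y) + J (br x (J y)) - br (J x) (J y) = 0
  phi_add_left : ∀ x y z : V, φ (x + y) z = φ x z + φ y z
  phi_smul_left : ∀ (c : ℝ) (x y : V), φ (c • x) y = c * φ x y
  phi_symm : ∀ x y : V, φ x y = φ y x
  phi_nondeg : ∀ x : V, (∀ y : V, φ x y = 0) → x = 0
  phi_invariant : ∀ x y z : V, φ (br x y) z + φ y (br x z) = 0
  phi_hermitian : ∀ x y : V, φ (J x) (J y) = φ x y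

/-- Equivalence of pseudo-Hermitian quadratic Lie algebras: a linear isomorphism
intertwining the brackets and the complex structures and preserving the metrics. -/
def PHQEquiv {V W : Type*} [AddCommGroup V] [Module ℝ V] [AddCommGroup W] [Module ℝ W]
    (brV : V → V → V) (JV : V → V) (φV : V → V → ℝ)
    (brW : W → W → W) (JW : W → W) (φW : W → W → ℝ) : Prop :=
  ∃ ψ : V ≃ₗ[ℝ] W, (∀ x y, ψ (brV x y) = brW (ψ x) (ψ y)) ∧
    (∀ x, ψ (JV x) = JW (ψ x)) ∧ ∀ x y, φW (ψ x) (ψ y) = φV x y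

/-- Lower central series of a subalgebra `W` with respect to a bracket `br`. -/
def lcsW {V : Type*} [AddCommGroup V] [Module ℝ V] (br : V → V → V)
    (W : Submodule ℝ V) : ℕ → Submodule ℝ V
  | 0 => W
  | n + 1 => Submodule.span ℝ {w : V | ∃ x ∈ lcsW br W n, ∃ y ∈ W, w = br x y}

/-- `φ` has signature `(a, b)`: there is an orthogonal decomposition into a
negative definite subspace of dimension `a` and a positive definite subspace of
dimension `b` (the convention of the paper, where positive definite is `(0, 2n)`). -/
def hasSignature {V : Type*} [AddCommGroup V] [Module ℝ V]
    (φ : V → V → ℝ) (a b : ℕ) : Prop :=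
  ∃ N P : Submodule ℝ V, N ⊓ P = ⊥ ∧ N ⊔ P = ⊤ ∧
    (∀ x ∈ N, ∀ y ∈ P, φ x y = 0) ∧
    (∀ x ∈ N, x ≠ 0 → φ x x < 0) ∧ (∀ x ∈ P, x ≠ 0 → 0 < φ x x) ∧
    Module.finrank ℝ N = a ∧ Module.finrank ℝ P = b

/-- The bracket of the pHQ-double extension `g = ℝz ⊕ ℝz' ⊕ g₀ ⊕ ℝv' ⊕ ℝv`,
with an element `(a, b, x, c, d)` standing for `a·z + b·z' + x + c·v' + d·v`. -/
def extBr {V : Type*} [AddCommGroup V] [Module ℝ V]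
    (br₀ : V → V → V) (φ₀ : V → V → ℝ) (D F : V → V) (s₀ : V) :
    (ℝ × ℝ × V × ℝ × ℝ) → (ℝ × ℝ × V × ℝ × ℝ) → (ℝ × ℝ × V × ℝ × ℝ) :=
  fun P Q =>
    (φ₀ (F P.2.2.1) Q.2.2.1 + P.2.2.2.1 * φ₀ s₀ Q.2.2.1 - Q.2.2.2.1 * φ₀ s₀ P.2.2.1,
     φ₀ (D P.2.2.1) Q.2.2.1 - P.2.2.2.2 * φ₀ s₀ Q.2.2.1 + Q.2.2.2.2 * φ₀ s₀ P.2.2.1,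
     br₀ P.2.2.1 Q.2.2.1 + P.2.2.2.2 • F Q.2.2.1 - Q.2.2.2.2 • F P.2.2.1
       + P.2.2.2.1 • D Q.2.2.1 - Q.2.2.2.1 • D P.2.2.1
       + (P.2.2.2.2 * Q.2.2.2.1 - P.2.2.2.1 * Q.2.2.2.2) • s₀,
     0, 0)

/-- The complex structure of the pHQ-double extension:
`Jz = z'`, `Jz' = -z`, `Jv = v'`, `Jv' = -v`, `Jx = J₀x`. -/
def extJ {V : Type*} [AddCommGroup V] [Module ℝ V] (J₀ : V → V) :
    (ℝ × ℝ × V × ℝ × ℝ) → (ℝ × ℝ × V × ℝ × ℝ) :=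
  fun P => (-P.2.1, P.1, J₀ P.2.2.1, P.2.2.2.2, -P.2.2.2.1)

/-- The metric of the pHQ-double extension: `φ(z,v) = φ(z',v') = 1` and `φ₀` on `g₀`. -/
def extPhi {V : Type*} [AddCommGroup V] [Module ℝ V] (φ₀ : V → V → ℝ) :
    (ℝ × ℝ × V × ℝ × ℝ) → (ℝ × ℝ × V × ℝ × ℝ) → ℝ :=
  fun P Q => P.1 * Q.2.2.2.2 + P.2.2.2.2 * Q.1 + P.2.1 * Q.2.2.2.1 + P.2.2.2.1 * Q.2.1
    + φ₀ P.2.2.1 Q.2.2.1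

/-- The data `(D, F, s₀)` needed for a pHQ-double extension of `(g₀, br₀, J₀, φ₀)`:
`D`, `F` are `φ₀`-skewsymmetric derivations with `[F + J₀D, J₀] = 0` and
`[F, D] = ad_{g₀}(s₀)`. -/
def IsPHQDblExtData (V : Type*) [AddCommGroup V] [Module ℝ V]
    (br₀ : V → V → V) (J₀ : V → V) (φ₀ : V → V → ℝ) (D F : V → V) (s₀ : V) : Prop :=
  (∀ x y, D (x + y) = D x + D y) ∧ (∀ (c : ℝ) (x : V), D (c • x) = c • D x) ∧
  (∀ x y, F (x + y) = F x + F y) ∧ (∀ (c : ℝ) (x : V), F (c • x) = c • F x) ∧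
  (∀ x y, φ₀ (D x) y = - φ₀ x (D y)) ∧ (∀ x y, φ₀ (F x) y = - φ₀ x (F y)) ∧
  (∀ x y, D (br₀ x y) = br₀ (D x) y + br₀ x (D y)) ∧
  (∀ x y, F (br₀ x y) = br₀ (F x) y + br₀ x (F y)) ∧
  (∀ x, F (J₀ x) + J₀ (D (J₀ x)) = J₀ (F x) + J₀ (J₀ (D x))) ∧
  (∀ x, F (D x) - D (F x) = br₀ s₀ x)

/-! ### Concrete models -/

/-- Standard complex structure on `ℝ²`. -/
def j2 : (Fin 2 → ℝ) → (Fin 2 → ℝ) := fun x => ![-x 1, x 0]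

/-- Positive definite Hermitian metric on `ℝ²` (the algebra `ℝ^{2,0}`). -/
def phi2 : (Fin 2 → ℝ) → (Fin 2 → ℝ) → ℝ := fun x y => x 0 * y 0 + x 1 * y 1

/-- Complex structure of the 6-dimensional Lie algebra `ℒ`, on the ordered basis
`x₁, Jx₁, x₂, Jx₂, x₃, Jx₃`. -/
def j6 : (Fin 6 → ℝ) → (Fin 6 → ℝ) := fun x => ![-x 1, x 0, -x 3, x 2, -x 5, x 4]

/-- Bracket of `ℒ`: `[x₁, Jx₁] = x₂`, `[x₁, x₂] = -Jx₃`, `[Jx₁, x₂] = x₃` on the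
ordered basis `x₁, Jx₁, x₂, Jx₂, x₃, Jx₃`. -/
def brL : (Fin 6 → ℝ) → (Fin 6 → ℝ) → (Fin 6 → ℝ) := fun x y =>
  ![0, 0, x 0 * y 1 - x 1 * y 0, 0, x 1 * y 2 - x 2 * y 1, -(x 0 * y 2 - x 2 * y 0)]

/-- The metric of `ℒ^{4,2}`: `φ(x₁,x₃) = φ(Jx₁,Jx₃) = 1`, `φ(x₂,x₂) = φ(Jx₂,Jx₂) = 1`. -/
def phiL : (Fin 6 → ℝ) → (Fin 6 → ℝ) → ℝ := fun x y =>
  x 0 * y 4 + x 4 * y 0 + x 1 * y 5 + x 5 * y 1 + x 2 * y 2 + x 3 * y 3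

/-- Complex structure on `ℝ⁸`, ordered basis `x₁, x₂, x₃, x₄, x₁*, x₂*, x₃*, x₄*` with
`Jx₁ = x₂`, `Jx₃ = x₄`, `Jx₁* = x₂*`, `Jx₃* = x₄*`. -/
def j8 : (Fin 8 → ℝ) → (Fin 8 → ℝ) := fun x =>
  ![-x 1, x 0, -x 3, x 2, -x 5, x 4, -x 7, x 6]

/-- The metric `φ(xᵢ, xⱼ*) = δᵢⱼ` of the `T*`-extensions of the Kodaira–Thurston algebra. -/
def phi8 : (Fin 8 → ℝ) → (Fin 8 → ℝ) → ℝ := fun x y =>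
  x 0 * y 4 + x 4 * y 0 + x 1 * y 5 + x 5 * y 1 + x 2 * y 6 + x 6 * y 2
    + x 3 * y 7 + x 7 * y 3

/-- A neutral pseudo-Hermitian metric on abelian `ℝ⁸` (the algebra `ℝ^{4,4}`). -/
def phi44 : (Fin 8 → ℝ) → (Fin 8 → ℝ) → ℝ := fun x y =>
  x 0 * y 0 + x 1 * y 1 + x 2 * y 2 + x 3 * y 3
    - x 4 * y 4 - x 5 * y 5 - x 6 * y 6 - x 7 * y 7

/-- Bracket of `T*₀k`: `[x₁,x₂] = x₃`, `[x₃*,x₁] = x₂*`, `[x₃*,x₂] = -x₁*`. -/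
def brT0 : (Fin 8 → ℝ) → (Fin 8 → ℝ) → (Fin 8 → ℝ) := fun x y =>
  ![0, 0, x 0 * y 1 - x 1 * y 0, 0,
    -(x 6 * y 1 - x 1 * y 6), x 6 * y 0 - x 0 * y 6, 0, 0]

/-- Bracket of `T*_{θ₃}k`: `[x₁,x₂] = x₃`, `[x₁,x₃] = x₄*`, `[x₁,x₄] = -x₃*`,
`[x₃,x₄] = x₁*`, `[x₃*,x₁] = x₂*`, `[x₃*,x₂] = -x₁*`. -/
def brT3 : (Fin 8 → ℝ) → (Fin 8 → ℝ) → (Fin 8 → ℝ) := fun x y =>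
  ![0, 0, x 0 * y 1 - x 1 * y 0, 0,
    (x 2 * y 3 - x 3 * y 2) - (x 6 * y 1 - x 1 * y 6),
    x 6 * y 0 - x 0 * y 6,
    -(x 0 * y 3 - x 3 * y 0),
    x 0 * y 2 - x 2 * y 0]

/-- Bracket of `T*_{αθ₁}k`: `[x₁,x₂] = x₃ + αx₃*`, `[x₁,x₃] = -αx₂*`, `[x₂,x₃] = αx₁*`,
`[x₃*,x₁] = x₂*`, `[x₃*,x₂] = -x₁*`. -/
def brTal (α : ℝ) : (Fin 8 → ℝ) → (Fin 8 → ℝ) → (Fin 8 → ℝ) := fun x y =>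
  ![0, 0, x 0 * y 1 - x 1 * y 0, 0,
    α * (x 1 * y 2 - x 2 * y 1) - (x 6 * y 1 - x 1 * y 6),
    -(α * (x 0 * y 2 - x 2 * y 0)) + (x 6 * y 0 - x 0 * y 6),
    α * (x 0 * y 1 - x 1 * y 0), 0]

/-- Bracket of the Kodaira–Thurston algebra `k`: `[x₁, x₂] = x₃`. -/
def brK : (Fin 4 → ℝ) → (Fin 4 → ℝ) → (Fin 4 → ℝ) := fun x y =>
  ![0, 0, x 0 * y 1 - x 1 * y 0, 0]

/-- The abelian complex structure of the Kodaira–Thurston algebra: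
`Jx₁ = x₂`, `Jx₂ = -x₁`, `Jx₃ = x₄`, `Jx₄ = -x₃`. -/
def jK : (Fin 4 → ℝ) → (Fin 4 → ℝ) := fun x => ![-x 1, x 0, -x 3, x 2]

/-- The dual basis vectors `xᵢ*` of `k*`. -/
noncomputable def p4 (i : Fin 4) : Module.Dual ℝ (Fin 4 → ℝ) := LinearMap.proj i

/-- The cyclic cocycle `θ₁`. -/
noncomputable def th1 : (Fin 4 → ℝ) → (Fin 4 → ℝ) → Module.Dual ℝ (Fin 4 → ℝ) := fun x y =>
  (x 0 * y 1 - x 1 * y 0) • p4 2 - (x 0 * y 2 - x 2 * y 0) • p4 1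
    + (x 1 * y 2 - x 2 * y 1) • p4 0

/-- The cyclic cocycle `θ₂`. -/
noncomputable def th2 : (Fin 4 → ℝ) → (Fin 4 → ℝ) → Module.Dual ℝ (Fin 4 → ℝ) := fun x y =>
  (x 0 * y 1 - x 1 * y 0) • p4 3 - (x 0 * y 3 - x 3 * y 0) • p4 1
    + (x 1 * y 3 - x 3 * y 1) • p4 0

/-- The cyclic cocycle `θ₃`. -/
noncomputable def th3 : (Fin 4 → ℝ) → (Fin 4 → ℝ) → Module.Dual ℝ (Fin 4 → ℝ) := fun x y =>
  (x 0 * y 2 - x 2 * y 0) • p4 3 - (x 0 * y 3 - x 3 * y 0) • p4 2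
    + (x 2 * y 3 - x 3 * y 2) • p4 0

/-- The cyclic cocycle `θ₄`. -/
noncomputable def th4 : (Fin 4 → ℝ) → (Fin 4 → ℝ) → Module.Dual ℝ (Fin 4 → ℝ) := fun x y =>
  (x 1 * y 2 - x 2 * y 1) • p4 3 - (x 1 * y 3 - x 3 * y 1) • p4 2
    + (x 2 * y 3 - x 3 * y 2) • p4 1

/-! ### Auxiliary machinery for the proof -/

lemma vec8_5' {β : Type*} (a b c d e f g h : β) : ![a,b,c,d,e,f,g,h] (5 : Fin 8) = f := rfl
lemma vec8_6' {β : Type*} (a b c d e f g h : β) : ![a,b,c,d,e,f,g,h] (6 : Fin 8) = g := rfl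
lemma vec8_7' {β : Type*} (a b c d e f g h : β) : ![a,b,c,d,e,f,g,h] (7 : Fin 8) = h := rfl

lemma brT0_eq_brTal0 : brT0 = brTal 0 := by
  funext x y; funext i
  fin_cases i <;> simp [brT0, brTal, vec8_5', vec8_6', vec8_7']

lemma phi8_brT0 (x y : Fin 8 → ℝ) : phi8 (brT0 x y) (brT0 x y) = 0 := by
  simp [phi8, brT0, vec8_5', vec8_6', vec8_7']

lemma phi8_brTal (α : ℝ) (x y : Fin 8 → ℝ) :
    phi8 (brTal α x y) (brTal α x y) = 2 * α * (x 0 * y 1 - x 1 * y 0)^2 := by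
  simp [phi8, brTal, vec8_5', vec8_6', vec8_7']; ring

/-- V-component of the comparison isomorphisms. -/
noncomputable def thC (J₀ : (Fin 4 → ℝ) → (Fin 4 → ℝ)) (p q : Fin 4 → ℝ) (u : Fin 8 → ℝ) :
    Fin 4 → ℝ :=
  u 2 • p + u 3 • J₀ p + u 6 • q + u 7 • J₀ q

/-- The comparison isomorphism in the non-abelian cases. -/
noncomputable def thF (J₀ : (Fin 4 → ℝ) → (Fin 4 → ℝ)) (p q : Fin 4 → ℝ) (a : ℝ)
    (u : Fin 8 → ℝ) : ℝ × ℝ × (Fin 4 → ℝ) × ℝ × ℝ :=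
  (a * u 4, a * u 5, thC J₀ p q u, u 1 / a, u 0 / a)

/-- The comparison isomorphism in the abelian case. -/
noncomputable def thF0 (J₀ : (Fin 4 → ℝ) → (Fin 4 → ℝ)) (p n : Fin 4 → ℝ)
    (u : Fin 8 → ℝ) : ℝ × ℝ × (Fin 4 → ℝ) × ℝ × ℝ :=
  (u 0 + u 4, u 1 + u 5, thC J₀ p n u, (u 1 - u 5)/2, (u 0 - u 4)/2)

section Master
variable {J₀ : (Fin 4 → ℝ) → (Fin 4 → ℝ)} {φ₀ : (Fin 4 → ℝ) → (Fin 4 → ℝ) → ℝ}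

lemma master (h₀ : IsPHQ (Fin 4 → ℝ) (fun _ _ => 0) J₀ φ₀)
    (s₀ p q : Fin 4 → ℝ) (α a : ℝ) (ha : a ≠ 0)
    (hpp : φ₀ p p = 0) (hqq : φ₀ q q = 0) (hpq : φ₀ p q = 1)
    (hpJq : φ₀ p (J₀ q) = 0)
    (hs : s₀ = (a^2) • p + (a^2*α) • q) :
    PHQEquiv (extBr (fun _ _ => 0) φ₀ (fun _ => 0) (fun _ => 0) s₀) (extJ J₀) (extPhi φ₀)
      (brTal α) j8 phi8 := by
  have hra : ∀ x y z, φ₀ x (y + z) = φ₀ x y + φ₀ x z := fun x y z => by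
    rw [h₀.phi_symm, h₀.phi_add_left, h₀.phi_symm y x, h₀.phi_symm z x]
  have hrs : ∀ (c : ℝ) (x y), φ₀ x (c • y) = c * φ₀ x y := fun c x y => by
    rw [h₀.phi_symm, h₀.phi_smul_left, h₀.phi_symm y x]
  have hz0 : ∀ y, φ₀ 0 y = 0 := fun y => by
    have := h₀.phi_smul_left 0 0 y; simpa using this
  have hJl : ∀ x y, φ₀ (J₀ x) y = - φ₀ x (J₀ y) := fun x y => by
    have := h₀.phi_hermitian (J₀ x) y
    rw [h₀.J_sq] at this
    rw [← this, ← neg_one_smul ℝ x, h₀.phi_smul_left]; ring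
  have hselfJ : ∀ x, φ₀ x (J₀ x) = 0 := fun x => by
    have h1 := hJl x x
    have h2 := h₀.phi_symm x (J₀ x)
    linarith [h1, h2]
  have hqp : φ₀ q p = 1 := by rw [h₀.phi_symm]; exact hpq
  have hpJp : φ₀ p (J₀ p) = 0 := hselfJ p
  have hJpp : φ₀ (J₀ p) p = 0 := by rw [h₀.phi_symm]; exact hpJp
  have hqJq : φ₀ q (J₀ q) = 0 := hselfJ q
  have hJqq : φ₀ (J₀ q) q = 0 := by rw [h₀.phi_symm]; exact hqJq
  have hJpq : φ₀ (J₀ p) q = 0 := by rw [hJl]; rw [hpJq]; ring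
  have hqJp : φ₀ q (J₀ p) = 0 := by rw [h₀.phi_symm]; exact hJpq
  have hJqp : φ₀ (J₀ q) p = 0 := by rw [hJl, hqJp]; ring
  have hpJq' : φ₀ p (J₀ q) = 0 := hpJq
  have hJpJp : φ₀ (J₀ p) (J₀ p) = 0 := by rw [h₀.phi_hermitian]; exact hpp
  have hJqJq : φ₀ (J₀ q) (J₀ q) = 0 := by rw [h₀.phi_hermitian]; exact hqq
  have hJpJq : φ₀ (J₀ p) (J₀ q) = 1 := by rw [h₀.phi_hermitian]; exact hpq
  have hJqJp : φ₀ (J₀ q) (J₀ p) = 1 := by rw [h₀.phi_hermitian]; exact hqp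
  have hφC : ∀ u w : Fin 8 → ℝ, φ₀ (thC J₀ p q u) (thC J₀ p q w)
      = u 2 * w 6 + u 6 * w 2 + u 3 * w 7 + u 7 * w 3 := by
    intro u w
    simp only [thC, h₀.phi_add_left, hra, h₀.phi_smul_left, hrs,
      hpp, hqq, hpq, hqp, hpJp, hJpp, hqJq, hJqq, hJpq, hqJp, hJqp, hpJq',
      hJpJp, hJqJq, hJpJq, hJqJp]
    ring
  have hφs : ∀ u : Fin 8 → ℝ, φ₀ s₀ (thC J₀ p q u) = a^2 * u 6 + a^2 * α * u 2 := by
    intro u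
    rw [hs]
    simp only [thC, h₀.phi_add_left, hra, h₀.phi_smul_left, hrs,
      hpp, hqq, hpq, hqp, hpJp, hJpp, hqJq, hJqq, hJpq, hqJp, hJqp, hpJq',
      hJpJp, hJqJq, hJpJq, hJqJp]
    ring
  have hJC : ∀ u : Fin 8 → ℝ, J₀ (thC J₀ p q u)
      = (-(u 3)) • p + u 2 • J₀ p + (-(u 7)) • q + u 6 • J₀ q := by
    intro u
    simp only [thC, h₀.J_add, h₀.J_smul, h₀.J_sq]
    module
  let Θ : (Fin 8 → ℝ) →ₗ[ℝ] (ℝ × ℝ × (Fin 4 → ℝ) × ℝ × ℝ) :=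
    { toFun := thF J₀ p q a
      map_add' := by
        intro u w
        simp only [thF, thC, Pi.add_apply, Prod.mk_add_mk, Prod.mk.injEq]
        refine ⟨by ring, by ring, by module, by ring, by ring⟩
      map_smul' := by
        intro c u
        simp only [thF, thC, Pi.smul_apply, smul_eq_mul, Prod.smul_mk, RingHom.id_apply,
          Prod.mk.injEq]
        refine ⟨by ring, by ring, by module, by ring, by ring⟩ }
  have hinj : Function.Injective Θ := by
    rw [← LinearMap.ker_eq_bot, LinearMap.ker_eq_bot']
    intro u hu
    have e1 : a * u 4 = 0 := congrArg Prod.fst hu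
    have e2 : a * u 5 = 0 := congrArg (fun P => P.2.1) hu
    have e3 : thC J₀ p q u = 0 := congrArg (fun P => P.2.2.1) hu
    have e4 : u 1 / a = 0 := congrArg (fun P => P.2.2.2.1) hu
    have e5 : u 0 / a = 0 := congrArg (fun P => P.2.2.2.2) hu
    have c2 : u 2 = 0 := by
      have := congrArg (fun x => φ₀ x q) e3
      simpa [thC, h₀.phi_add_left, h₀.phi_smul_left, hpq, hqq, hJpq, hJqq, hz0] using this
    have c6 : u 6 = 0 := by
      have := congrArg (fun x => φ₀ x p) e3
      simpa [thC, h₀.phi_add_left, h₀.phi_smul_left, hpp, hqp, hJpp, hJqp, hz0] using this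
    have c3 : u 3 = 0 := by
      have := congrArg (fun x => φ₀ x (J₀ q)) e3
      simpa [thC, h₀.phi_add_left, h₀.phi_smul_left, hpJq', hqJq, hJpJq, hJqJq, hz0] using this
    have c7 : u 7 = 0 := by
      have := congrArg (fun x => φ₀ x (J₀ p)) e3
      simpa [thC, h₀.phi_add_left, h₀.phi_smul_left, hpJp, hqJp, hJpJp, hJqJp, hz0] using this
    have c4 : u 4 = 0 := by rcases mul_eq_zero.mp e1 with h | h; exact absurd h ha; exact h
    have c5 : u 5 = 0 := by rcases mul_eq_zero.mp e2 with h | h; exact absurd h ha; exact h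
    have c1 : u 1 = 0 := by field_simp at e4; simpa using e4
    have c0 : u 0 = 0 := by field_simp at e5; simpa using e5
    funext i
    fin_cases i <;> simpa using by assumption
  have hrank : Module.finrank ℝ (Fin 8 → ℝ)
      = Module.finrank ℝ (ℝ × ℝ × (Fin 4 → ℝ) × ℝ × ℝ) := by simp
  let E := LinearMap.linearEquivOfInjective Θ hinj hrank
  have hE : ∀ u, E u = thF J₀ p q a u := fun _ => rfl
  refine ⟨E.symm, ?_, ?_, ?_⟩
  · have key : ∀ u w : Fin 8 → ℝ,
        extBr (fun _ _ => 0) φ₀ (fun _ => 0) (fun _ => 0) s₀ (thF J₀ p q a u) (thF J₀ p q a w)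
          = thF J₀ p q a (brTal α u w) := by
      intro u w
      simp only [extBr, thF, Prod.mk.injEq]
      refine ⟨?_, ?_, ?_, ?_, ?_⟩
      · rw [hz0, hφs, hφs]
        show _ = a * (α * (u 1 * w 2 - u 2 * w 1) - (u 6 * w 1 - u 1 * w 6))
        field_simp
        ring
      · rw [hz0, hφs, hφs]
        show _ = a * (-(α * (u 0 * w 2 - u 2 * w 0)) + (u 6 * w 0 - u 0 * w 6))
        field_simp
        ring
      · show (0:Fin 4 → ℝ) + _ - _ + _ - _ + _ = thC J₀ p q (brTal α u w)
        rw [hs]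
        show (0:Fin 4 → ℝ) + _ - _ + _ - _ + _
          = (u 0 * w 1 - u 1 * w 0) • p + (0:ℝ) • J₀ p
            + (α * (u 0 * w 1 - u 1 * w 0)) • q + (0:ℝ) • J₀ q
        simp only [smul_zero, zero_add, sub_zero, add_zero, zero_smul, smul_add, smul_smul]
        match_scalars <;> (field_simp; try ring) <;> (left; first | trivial | ring)
      · show (0:ℝ) = (0:ℝ) / a; simp
      · show (0:ℝ) = (0:ℝ) / a; simp
    intro x y
    obtain ⟨u, rfl⟩ : ∃ u, x = E u := ⟨E.symm x, (E.apply_symm_apply x).symm⟩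
    obtain ⟨w, rfl⟩ : ∃ w, y = E w := ⟨E.symm y, (E.apply_symm_apply y).symm⟩
    rw [E.symm_apply_apply, E.symm_apply_apply, hE u, hE w, key, ← hE, E.symm_apply_apply]
  · have key : ∀ u : Fin 8 → ℝ, extJ J₀ (thF J₀ p q a u) = thF J₀ p q a (j8 u) := by
      intro u
      simp only [extJ, thF, Prod.mk.injEq]
      refine ⟨?_, ?_, ?_, ?_, ?_⟩
      · show -(a * u 5) = a * (-(u 5)); ring
      · show a * u 4 = a * (u 4); ring
      · rw [hJC]
        show _ = (-(u 3)) • p + u 2 • J₀ p + (-(u 7)) • q + u 6 • J₀ q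
        rfl
      · rfl
      · show -(u 1 / a) = (-(u 1)) / a; ring
    intro x
    obtain ⟨u, rfl⟩ : ∃ u, x = E u := ⟨E.symm x, (E.apply_symm_apply x).symm⟩
    rw [E.symm_apply_apply, hE u, key, ← hE, E.symm_apply_apply]
  · have key : ∀ u w : Fin 8 → ℝ, phi8 u w = extPhi φ₀ (thF J₀ p q a u) (thF J₀ p q a w) := by
      intro u w
      simp only [extPhi, thF]
      rw [hφC]
      show phi8 u w = _
      simp only [phi8]
      field_simp
      ring
    intro x y
    obtain ⟨u, rfl⟩ : ∃ u, x = E u := ⟨E.symm x, (E.apply_symm_apply x).symm⟩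
    obtain ⟨w, rfl⟩ : ∃ w, y = E w := ⟨E.symm y, (E.apply_symm_apply y).symm⟩
    rw [E.symm_apply_apply, E.symm_apply_apply, hE u, hE w, ← key]

end Master
section Master0
variable {J₀ : (Fin 4 → ℝ) → (Fin 4 → ℝ)} {φ₀ : (Fin 4 → ℝ) → (Fin 4 → ℝ) → ℝ}

lemma master0 (h₀ : IsPHQ (Fin 4 → ℝ) (fun _ _ => 0) J₀ φ₀)
    (p n : Fin 4 → ℝ)
    (hpp : φ₀ p p = 1) (hnn : φ₀ n n = -1) (hpn : φ₀ p n = 0)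
    (hpJn : φ₀ p (J₀ n) = 0) :
    PHQEquiv (extBr (fun _ _ => 0) φ₀ (fun _ => 0) (fun _ => 0) 0) (extJ J₀) (extPhi φ₀)
      (fun _ _ => (0 : Fin 8 → ℝ)) j8 phi44 := by
  have hra : ∀ x y z, φ₀ x (y + z) = φ₀ x y + φ₀ x z := fun x y z => by
    rw [h₀.phi_symm, h₀.phi_add_left, h₀.phi_symm y x, h₀.phi_symm z x]
  have hrs : ∀ (c : ℝ) (x y), φ₀ x (c • y) = c * φ₀ x y := fun c x y => by
    rw [h₀.phi_symm, h₀.phi_smul_left, h₀.phi_symm y x]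
  have hz0 : ∀ y, φ₀ 0 y = 0 := fun y => by
    have := h₀.phi_smul_left 0 0 y; simpa using this
  have hJl : ∀ x y, φ₀ (J₀ x) y = - φ₀ x (J₀ y) := fun x y => by
    have := h₀.phi_hermitian (J₀ x) y
    rw [h₀.J_sq] at this
    rw [← this, ← neg_one_smul ℝ x, h₀.phi_smul_left]; ring
  have hselfJ : ∀ x, φ₀ x (J₀ x) = 0 := fun x => by
    have h1 := hJl x x
    have h2 := h₀.phi_symm x (J₀ x)
    linarith [h1, h2]
  have hnp : φ₀ n p = 0 := by rw [h₀.phi_symm]; exact hpn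
  have hpJp : φ₀ p (J₀ p) = 0 := hselfJ p
  have hJpp : φ₀ (J₀ p) p = 0 := by rw [h₀.phi_symm]; exact hpJp
  have hnJn : φ₀ n (J₀ n) = 0 := hselfJ n
  have hJnn : φ₀ (J₀ n) n = 0 := by rw [h₀.phi_symm]; exact hnJn
  have hJpn : φ₀ (J₀ p) n = 0 := by rw [hJl]; rw [hpJn]; ring
  have hnJp : φ₀ n (J₀ p) = 0 := by rw [h₀.phi_symm]; exact hJpn
  have hJnp : φ₀ (J₀ n) p = 0 := by rw [hJl, hnJp]; ring
  have hpJn' : φ₀ p (J₀ n) = 0 := hpJn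
  have hJpJp : φ₀ (J₀ p) (J₀ p) = 1 := by rw [h₀.phi_hermitian]; exact hpp
  have hJnJn : φ₀ (J₀ n) (J₀ n) = -1 := by rw [h₀.phi_hermitian]; exact hnn
  have hJpJn : φ₀ (J₀ p) (J₀ n) = 0 := by rw [h₀.phi_hermitian]; exact hpn
  have hJnJp : φ₀ (J₀ n) (J₀ p) = 0 := by rw [h₀.phi_hermitian]; exact hnp
  have hφC : ∀ u w : Fin 8 → ℝ, φ₀ (thC J₀ p n u) (thC J₀ p n w)
      = u 2 * w 2 + u 3 * w 3 - u 6 * w 6 - u 7 * w 7 := by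
    intro u w
    simp only [thC, h₀.phi_add_left, hra, h₀.phi_smul_left, hrs,
      hpp, hnn, hpn, hnp, hpJp, hJpp, hnJn, hJnn, hJpn, hnJp, hJnp, hpJn',
      hJpJp, hJnJn, hJpJn, hJnJp]
    ring
  have hJC : ∀ u : Fin 8 → ℝ, J₀ (thC J₀ p n u)
      = (-(u 3)) • p + u 2 • J₀ p + (-(u 7)) • n + u 6 • J₀ n := by
    intro u
    simp only [thC, h₀.J_add, h₀.J_smul, h₀.J_sq]
    module
  have hbr0 : ∀ P Q, extBr (fun _ _ => (0 : Fin 4 → ℝ)) φ₀ (fun _ => 0) (fun _ => 0) 0 P Q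
      = 0 := by
    intro P Q
    show (φ₀ 0 Q.2.2.1 + P.2.2.2.1 * φ₀ 0 Q.2.2.1 - Q.2.2.2.1 * φ₀ 0 P.2.2.1,
          φ₀ 0 Q.2.2.1 - P.2.2.2.2 * φ₀ 0 Q.2.2.1 + Q.2.2.2.2 * φ₀ 0 P.2.2.1,
          (0:Fin 4 → ℝ) + P.2.2.2.2 • (0:Fin 4 → ℝ) - Q.2.2.2.2 • (0:Fin 4 → ℝ)
            + P.2.2.2.1 • (0:Fin 4 → ℝ) - Q.2.2.2.1 • (0:Fin 4 → ℝ)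
            + (P.2.2.2.2 * Q.2.2.2.1 - P.2.2.2.1 * Q.2.2.2.2) • (0:Fin 4 → ℝ),
          (0:ℝ), (0:ℝ)) = (0, 0, 0, 0, 0)
    rw [hz0, hz0]
    simp
  let Θ : (Fin 8 → ℝ) →ₗ[ℝ] (ℝ × ℝ × (Fin 4 → ℝ) × ℝ × ℝ) :=
    { toFun := thF0 J₀ p n
      map_add' := by
        intro u w
        simp only [thF0, thC, Pi.add_apply, Prod.mk_add_mk, Prod.mk.injEq]
        refine ⟨by ring, by ring, by module, by ring, by ring⟩
      map_smul' := by
        intro c u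
        simp only [thF0, thC, Pi.smul_apply, smul_eq_mul, Prod.smul_mk, RingHom.id_apply,
          Prod.mk.injEq]
        refine ⟨by ring, by ring, by module, by ring, by ring⟩ }
  have hinj : Function.Injective Θ := by
    rw [← LinearMap.ker_eq_bot, LinearMap.ker_eq_bot']
    intro u hu
    have e1 : u 0 + u 4 = 0 := congrArg Prod.fst hu
    have e2 : u 1 + u 5 = 0 := congrArg (fun P => P.2.1) hu
    have e3 : thC J₀ p n u = 0 := congrArg (fun P => P.2.2.1) hu
    have e4 : (u 1 - u 5)/2 = 0 := congrArg (fun P => P.2.2.2.1) hu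
    have e5 : (u 0 - u 4)/2 = 0 := congrArg (fun P => P.2.2.2.2) hu
    have c2 : u 2 = 0 := by
      have := congrArg (fun x => φ₀ x p) e3
      simpa [thC, h₀.phi_add_left, h₀.phi_smul_left, hpp, hnp, hJpp, hJnp, hz0] using this
    have c6 : u 6 = 0 := by
      have := congrArg (fun x => φ₀ x n) e3
      have h' : u 2 * φ₀ p n + u 3 * φ₀ (J₀ p) n + u 6 * φ₀ n n + u 7 * φ₀ (J₀ n) n = 0 := by
        simpa [thC, h₀.phi_add_left, h₀.phi_smul_left, hz0] using this
      rw [hpn, hJpn, hnn, hJnn] at h'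
      linarith
    have c3 : u 3 = 0 := by
      have := congrArg (fun x => φ₀ x (J₀ p)) e3
      simpa [thC, h₀.phi_add_left, h₀.phi_smul_left, hpJp, hnJp, hJpJp, hJnJp, hz0] using this
    have c7 : u 7 = 0 := by
      have := congrArg (fun x => φ₀ x (J₀ n)) e3
      have h' : u 2 * φ₀ p (J₀ n) + u 3 * φ₀ (J₀ p) (J₀ n) + u 6 * φ₀ n (J₀ n)
          + u 7 * φ₀ (J₀ n) (J₀ n) = 0 := by
        simpa [thC, h₀.phi_add_left, h₀.phi_smul_left, hz0] using this
      rw [hpJn', hJpJn, hnJn, hJnJn] at h'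
      linarith
    have c0 : u 0 = 0 := by
      have : u 0 - u 4 = 0 := by linarith [e5]
      linarith
    have c4 : u 4 = 0 := by
      have : u 0 - u 4 = 0 := by linarith [e5]
      linarith
    have c1 : u 1 = 0 := by
      have : u 1 - u 5 = 0 := by linarith [e4]
      linarith
    have c5 : u 5 = 0 := by
      have : u 1 - u 5 = 0 := by linarith [e4]
      linarith
    funext i
    fin_cases i <;> simpa using by assumption
  have hrank : Module.finrank ℝ (Fin 8 → ℝ)
      = Module.finrank ℝ (ℝ × ℝ × (Fin 4 → ℝ) × ℝ × ℝ) := by simp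
  let E := LinearMap.linearEquivOfInjective Θ hinj hrank
  have hE : ∀ u, E u = thF0 J₀ p n u := fun _ => rfl
  refine ⟨E.symm, ?_, ?_, ?_⟩
  · intro x y
    rw [hbr0, map_zero]
  · have key : ∀ u : Fin 8 → ℝ, extJ J₀ (thF0 J₀ p n u) = thF0 J₀ p n (j8 u) := by
      intro u
      simp only [extJ, thF0, Prod.mk.injEq]
      refine ⟨?_, ?_, ?_, ?_, ?_⟩
      · show -(u 1 + u 5) = (-(u 1)) + (-(u 5)); ring
      · show u 0 + u 4 = u 0 + u 4; rfl
      · rw [hJC]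
        show _ = (-(u 3)) • p + u 2 • J₀ p + (-(u 7)) • n + u 6 • J₀ n
        rfl
      · show (u 0 - u 4)/2 = (u 0 - u 4)/2; rfl
      · show -((u 1 - u 5)/2) = ((-(u 1)) - (-(u 5)))/2; ring
    intro x
    obtain ⟨u, rfl⟩ : ∃ u, x = E u := ⟨E.symm x, (E.apply_symm_apply x).symm⟩
    rw [E.symm_apply_apply, hE u, key, ← hE, E.symm_apply_apply]
  · have key : ∀ u w : Fin 8 → ℝ, phi44 u w = extPhi φ₀ (thF0 J₀ p n u) (thF0 J₀ p n w) := by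
      intro u w
      simp only [extPhi, thF0]
      rw [hφC]
      show phi44 u w = _
      simp only [phi44]
      ring
    intro x y
    obtain ⟨u, rfl⟩ : ∃ u, x = E u := ⟨E.symm x, (E.apply_symm_apply x).symm⟩
    obtain ⟨w, rfl⟩ : ∃ w, y = E w := ⟨E.symm y, (E.apply_symm_apply y).symm⟩
    rw [E.symm_apply_apply, E.symm_apply_apply, hE u, hE w, ← key]

lemma ortho_proj (h₀ : IsPHQ (Fin 4 → ℝ) (fun _ _ => 0) J₀ φ₀)
    (t n : Fin 4 → ℝ) (hne : φ₀ t t ≠ 0) :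
    ∃ w₀ : Fin 4 → ℝ, φ₀ t w₀ = 0 ∧ φ₀ (J₀ t) w₀ = 0 ∧
      φ₀ t t * φ₀ w₀ w₀ = φ₀ t t * φ₀ n n - ((φ₀ n t)^2 + (φ₀ n (J₀ t))^2) := by
  have hra : ∀ x y z, φ₀ x (y + z) = φ₀ x y + φ₀ x z := fun x y z => by
    rw [h₀.phi_symm, h₀.phi_add_left, h₀.phi_symm y x, h₀.phi_symm z x]
  have hrs : ∀ (c : ℝ) (x y), φ₀ x (c • y) = c * φ₀ x y := fun c x y => by
    rw [h₀.phi_symm, h₀.phi_smul_left, h₀.phi_symm y x]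
  have hJl : ∀ x y, φ₀ (J₀ x) y = - φ₀ x (J₀ y) := fun x y => by
    have := h₀.phi_hermitian (J₀ x) y
    rw [h₀.J_sq] at this
    rw [← this, ← neg_one_smul ℝ x, h₀.phi_smul_left]; ring
  have hselfJ : ∀ x, φ₀ x (J₀ x) = 0 := fun x => by
    have h1 := hJl x x
    have h2 := h₀.phi_symm x (J₀ x)
    linarith [h1, h2]
  have htJt : φ₀ t (J₀ t) = 0 := hselfJ t
  have hJtt : φ₀ (J₀ t) t = 0 := by rw [h₀.phi_symm]; exact htJt
  have hJtJt : φ₀ (J₀ t) (J₀ t) = φ₀ t t := h₀.phi_hermitian t t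
  have htn : φ₀ t n = φ₀ n t := h₀.phi_symm t n
  have hJtn : φ₀ (J₀ t) n = φ₀ n (J₀ t) := h₀.phi_symm (J₀ t) n
  refine ⟨n + (-(φ₀ n t / φ₀ t t)) • t + (-(φ₀ n (J₀ t) / φ₀ t t)) • J₀ t, ?_, ?_, ?_⟩
  · simp only [hra, hrs, htn, htJt]
    field_simp
    ring
  · simp only [hra, hrs, hJtt, hJtJt, hJtn]
    field_simp
    ring
  · simp only [h₀.phi_add_left, h₀.phi_smul_left, hra, hrs, htn, hJtn, htJt, hJtt, hJtJt]
    field_simp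
    ring

end Master0

set_option maxHeartbeats 4000000 in
/-- the pHQ-double extension of `ℝ^{2,2}` by `D = F = 0` and `s₀` is
equivalent to exactly one of `ℝ^{4,4}` (when `s₀ = 0`), `T*₀k` (when `s₀ ≠ 0` is
isotropic), `T*_{θ₁}k` or `T*_{-θ₁}k` (according to the sign of `φ₀(s₀,s₀) ≠ 0`). -/
theorem stmt_13
    (J₀ : (Fin 4 → ℝ) → (Fin 4 → ℝ)) (φ₀ : (Fin 4 → ℝ) → (Fin 4 → ℝ) → ℝ)
    (h₀ : IsPHQ (Fin 4 → ℝ) (fun _ _ => 0) J₀ φ₀)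
    (hsig : hasSignature φ₀ 2 2)
    (s₀ : Fin 4 → ℝ) :
    (s₀ = 0 →
      PHQEquiv (extBr (fun _ _ => 0) φ₀ (fun _ => 0) (fun _ => 0) s₀) (extJ J₀) (extPhi φ₀)
        (fun _ _ => (0 : Fin 8 → ℝ)) j8 phi44) ∧
    (s₀ ≠ 0 → φ₀ s₀ s₀ = 0 →
      PHQEquiv (extBr (fun _ _ => 0) φ₀ (fun _ => 0) (fun _ => 0) s₀) (extJ J₀) (extPhi φ₀)
        brT0 j8 phi8) ∧
    (0 < φ₀ s₀ s₀ →
      PHQEquiv (extBr (fun _ _ => 0) φ₀ (fun _ => 0) (fun _ => 0) s₀) (extJ J₀) (extPhi φ₀)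
        (brTal 1) j8 phi8) ∧
    (φ₀ s₀ s₀ < 0 →
      PHQEquiv (extBr (fun _ _ => 0) φ₀ (fun _ => 0) (fun _ => 0) s₀) (extJ J₀) (extPhi φ₀)
        (brTal (-1)) j8 phi8) ∧
    ¬ PHQEquiv (fun _ _ => (0 : Fin 8 → ℝ)) j8 phi44 brT0 j8 phi8 ∧
    ¬ PHQEquiv (fun _ _ => (0 : Fin 8 → ℝ)) j8 phi44 (brTal 1) j8 phi8 ∧
    ¬ PHQEquiv (fun _ _ => (0 : Fin 8 → ℝ)) j8 phi44 (brTal (-1)) j8 phi8 ∧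
    ¬ PHQEquiv brT0 j8 phi8 (brTal 1) j8 phi8 ∧
    ¬ PHQEquiv brT0 j8 phi8 (brTal (-1)) j8 phi8 ∧
    ¬ PHQEquiv (brTal 1) j8 phi8 (brTal (-1)) j8 phi8 := by
  obtain ⟨N, P, hNP, hsup, horth, hneg, hpos, hdimN, hdimP⟩ := hsig
  have hra : ∀ x y z, φ₀ x (y + z) = φ₀ x y + φ₀ x z := fun x y z => by
    rw [h₀.phi_symm, h₀.phi_add_left, h₀.phi_symm y x, h₀.phi_symm z x]
  have hrs : ∀ (c : ℝ) (x y), φ₀ x (c • y) = c * φ₀ x y := fun c x y => by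
    rw [h₀.phi_symm, h₀.phi_smul_left, h₀.phi_symm y x]
  have hz0 : ∀ y, φ₀ 0 y = 0 := fun y => by
    have := h₀.phi_smul_left 0 0 y; simpa using this
  have hJl : ∀ x y, φ₀ (J₀ x) y = - φ₀ x (J₀ y) := fun x y => by
    have := h₀.phi_hermitian (J₀ x) y
    rw [h₀.J_sq] at this
    rw [← this, ← neg_one_smul ℝ x, h₀.phi_smul_left]; ring
  have hselfJ : ∀ x, φ₀ x (J₀ x) = 0 := fun x => by
    have h1 := hJl x x
    have h2 := h₀.phi_symm x (J₀ x)
    linarith [h1, h2]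
  have hNex : ∃ n ∈ N, n ≠ 0 := by
    by_contra h
    push_neg at h
    have hN : N = ⊥ := (Submodule.eq_bot_iff N).mpr h
    rw [hN] at hdimN
    simp at hdimN
  have hPex : ∃ x ∈ P, x ≠ 0 := by
    by_contra h
    push_neg at h
    have hP : P = ⊥ := (Submodule.eq_bot_iff P).mpr h
    rw [hP] at hdimP
    simp at hdimP
  have signcase : ∀ α : ℝ, α = 1 ∨ α = -1 → 0 < α * φ₀ s₀ s₀ →
      PHQEquiv (extBr (fun _ _ => 0) φ₀ (fun _ => 0) (fun _ => 0) s₀) (extJ J₀) (extPhi φ₀)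
        (brTal α) j8 phi8 := by
    intro α hα hsgn
    have hα2 : α * α = 1 := by rcases hα with h|h <;> rw [h] <;> norm_num
    have hcne : φ₀ s₀ s₀ ≠ 0 := by
      intro h; rw [h, mul_zero] at hsgn; exact lt_irrefl 0 hsgn
    set d : ℝ := α * φ₀ s₀ s₀ with hdDef
    have hd : 0 < d := hsgn
    have hφss : φ₀ s₀ s₀ = α * d := by
      rw [hdDef]; linear_combination (-(φ₀ s₀ s₀)) * hα2
    have hd2 : (0:ℝ) < d/2 := by linarith
    set a : ℝ := Real.sqrt (Real.sqrt (d/2)) with haDef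
    have ha' : 0 < a := Real.sqrt_pos.mpr (Real.sqrt_pos.mpr hd2)
    have ha : a ≠ 0 := ne_of_gt ha'
    have ha4 : a^2 * a^2 = d/2 := by
      rw [haDef, Real.sq_sqrt (Real.sqrt_nonneg _)]
      exact Real.mul_self_sqrt hd2.le
    obtain ⟨n₀, hn₀⟩ : ∃ n₀ : Fin 4 → ℝ, α * φ₀ n₀ n₀ < 0 := by
      rcases hα with h|h
      · obtain ⟨n, hnN, hne⟩ := hNex
        exact ⟨n, by rw [h, one_mul]; exact hneg n hnN hne⟩
      · obtain ⟨n, hnP, hne⟩ := hPex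
        refine ⟨n, ?_⟩
        have := hpos n hnP hne
        rw [h]; nlinarith
    obtain ⟨w₀, hw1, hw2, hw3⟩ := ortho_proj h₀ s₀ n₀ hcne
    rw [hφss] at hw3
    have hw3' : d * (α * φ₀ w₀ w₀)
        = d * (α * φ₀ n₀ n₀) - ((φ₀ n₀ s₀)^2 + (φ₀ n₀ (J₀ s₀))^2) := by
      linear_combination hw3
    have hwneg : α * φ₀ w₀ w₀ < 0 := by
      nlinarith [sq_nonneg (φ₀ n₀ s₀), sq_nonneg (φ₀ n₀ (J₀ s₀)),
        mul_pos hd (neg_pos.mpr hn₀)]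
    set m : ℝ := -(α * φ₀ w₀ w₀) with hmDef
    have hm : 0 < m := by linarith
    have h2m : (0:ℝ) < 2*m := by linarith
    have hw₀ : φ₀ w₀ w₀ = -α * m := by
      rw [hmDef]; linear_combination (-(φ₀ w₀ w₀)) * hα2
    set r2 : ℝ := Real.sqrt (2*m) with hr2Def
    have hr2 : r2 * r2 = 2*m := Real.mul_self_sqrt h2m.le
    have hr2ne : r2 ≠ 0 := ne_of_gt (Real.sqrt_pos.mpr h2m)
    obtain ⟨w, hwDef⟩ : ∃ w : Fin 4 → ℝ, w = r2⁻¹ • w₀ := ⟨_, rfl⟩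
    have hww : φ₀ w w = -α/2 := by
      rw [hwDef, h₀.phi_smul_left, hrs, hw₀]
      field_simp
      linear_combination α * hr2 + (2*α) * hmDef
    have hsw : φ₀ s₀ w = 0 := by rw [hwDef, hrs, hw1, mul_zero]
    have hJsw : φ₀ (J₀ s₀) w = 0 := by rw [hwDef, hrs, hw2, mul_zero]
    have hws : φ₀ w s₀ = 0 := by rw [h₀.phi_symm]; exact hsw
    have hwJs : φ₀ w (J₀ s₀) = 0 := by rw [h₀.phi_symm]; exact hJsw
    have hsJw : φ₀ s₀ (J₀ w) = 0 := by have := hJl s₀ w; linarith [hJsw]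
    obtain ⟨p, hpDef⟩ : ∃ p : Fin 4 → ℝ, p = (1/(2*a^2)) • s₀ + w := ⟨_, rfl⟩
    obtain ⟨q, hqDef⟩ : ∃ q : Fin 4 → ℝ, q = α • ((1/(2*a^2)) • s₀ + (-1 : ℝ) • w) := ⟨_, rfl⟩
    have hss : φ₀ s₀ s₀ = α * (2*(a^2*a^2)) := by rw [ha4, hφss]; ring
    have hpp : φ₀ p p = 0 := by
      rw [hpDef]
      simp only [h₀.phi_add_left, hra, h₀.phi_smul_left, hrs, hss, hsw, hws, hww]
      field_simp
      ring
    have hqq : φ₀ q q = 0 := by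
      rw [hqDef]
      simp only [h₀.phi_add_left, hra, h₀.phi_smul_left, hrs, hss, hsw, hws, hww]
      field_simp
      ring
    have hpq : φ₀ p q = 1 := by
      rw [hpDef, hqDef]
      simp only [h₀.phi_add_left, hra, h₀.phi_smul_left, hrs, hss, hsw, hws, hww]
      rcases hα with h|h <;> rw [h] <;> (field_simp; ring)
    have hpJq : φ₀ p (J₀ q) = 0 := by
      rw [hpDef, hqDef]
      simp only [h₀.J_add, h₀.J_smul, h₀.phi_add_left, hra, h₀.phi_smul_left, hrs,
        hselfJ, hsJw, hwJs]
      ring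
    have hs : s₀ = (a^2) • p + (a^2*α) • q := by
      rw [hpDef, hqDef]
      match_scalars <;> rcases hα with h|h <;> rw [h] <;> (field_simp; try ring)
    exact master h₀ s₀ p q α a ha hpp hqq hpq hpJq hs
  refine ⟨?_, ?_, ?_, ?_, ?_, ?_, ?_, ?_, ?_, ?_⟩
  · -- s₀ = 0 : abelian
    intro h
    subst h
    obtain ⟨p₀, hp₀P, hp₀ne⟩ := hPex
    have hp₀pos := hpos p₀ hp₀P hp₀ne
    have hsq : Real.sqrt (φ₀ p₀ p₀) * Real.sqrt (φ₀ p₀ p₀) = φ₀ p₀ p₀ :=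
      Real.mul_self_sqrt hp₀pos.le
    have hsqne : Real.sqrt (φ₀ p₀ p₀) ≠ 0 := ne_of_gt (Real.sqrt_pos.mpr hp₀pos)
    obtain ⟨p, hpDef⟩ : ∃ p : Fin 4 → ℝ, p = (Real.sqrt (φ₀ p₀ p₀))⁻¹ • p₀ := ⟨_, rfl⟩
    have hpp : φ₀ p p = 1 := by
      rw [hpDef, h₀.phi_smul_left, hrs]
      field_simp
      linear_combination -hsq
    obtain ⟨n₀, hn₀N, hn₀ne⟩ := hNex
    have hn₀neg := hneg n₀ hn₀N hn₀ne
    obtain ⟨w₀, hw1, hw2, hw3⟩ := ortho_proj h₀ p n₀ (by rw [hpp]; norm_num)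
    rw [hpp, one_mul, one_mul] at hw3
    have hw₀neg : φ₀ w₀ w₀ < 0 := by
      nlinarith [sq_nonneg (φ₀ n₀ p), sq_nonneg (φ₀ n₀ (J₀ p))]
    have hsqn : Real.sqrt (-φ₀ w₀ w₀) * Real.sqrt (-φ₀ w₀ w₀) = -φ₀ w₀ w₀ :=
      Real.mul_self_sqrt (by linarith)
    have hsqnne : Real.sqrt (-φ₀ w₀ w₀) ≠ 0 :=
      ne_of_gt (Real.sqrt_pos.mpr (by linarith))
    obtain ⟨n, hnDef⟩ : ∃ n : Fin 4 → ℝ, n = (Real.sqrt (-φ₀ w₀ w₀))⁻¹ • w₀ := ⟨_, rfl⟩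
    have hnn : φ₀ n n = -1 := by
      rw [hnDef, h₀.phi_smul_left, hrs]
      field_simp
      linear_combination hsqn
    have hpw : φ₀ p w₀ = 0 := hw1
    have hpn : φ₀ p n = 0 := by rw [hnDef, hrs, hpw, mul_zero]
    have hpJn : φ₀ p (J₀ n) = 0 := by
      rw [hnDef, h₀.J_smul, hrs]
      have : φ₀ p (J₀ w₀) = 0 := by have := hJl p w₀; linarith [hw2]
      rw [this, mul_zero]
    exact master0 h₀ p n hpp hnn hpn hpJn
  · -- s₀ ≠ 0 isotropic
    intro hs0ne hiso
    obtain ⟨y, hy⟩ : ∃ y, φ₀ s₀ y ≠ 0 := by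
      by_contra h; push_neg at h; exact hs0ne (h₀.phi_nondeg s₀ h)
    obtain ⟨u₁, hu₁Def⟩ : ∃ u₁ : Fin 4 → ℝ, u₁ = (φ₀ s₀ y)⁻¹ • y := ⟨_, rfl⟩
    have h1 : φ₀ s₀ u₁ = 1 := by rw [hu₁Def, hrs]; field_simp
    obtain ⟨β, hβDef⟩ : ∃ β : ℝ, β = φ₀ (J₀ s₀) u₁ := ⟨_, rfl⟩
    have hβ2 : (1:ℝ) + β^2 ≠ 0 := by positivity
    obtain ⟨u₂, hu₂Def⟩ : ∃ u₂ : Fin 4 → ℝ, u₂ = ((1:ℝ) + β^2)⁻¹ • (u₁ + (-β) • J₀ u₁) := ⟨_, rfl⟩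
    have hsJu₁ : φ₀ s₀ (J₀ u₁) = -β := by
      have := hJl s₀ u₁; rw [← hβDef] at this; linarith
    have h2 : φ₀ s₀ u₂ = 1 := by
      rw [hu₂Def, hrs, hra, hrs, h1, hsJu₁]
      field_simp
    have h3 : φ₀ (J₀ s₀) u₂ = 0 := by
      rw [hu₂Def, hrs, hra, hrs, ← hβDef]
      have hJJ : φ₀ (J₀ s₀) (J₀ u₁) = 1 := by rw [h₀.phi_hermitian]; exact h1
      rw [hJJ]
      field_simp
      ring
    obtain ⟨μ, hμDef⟩ : ∃ μ : ℝ, μ = φ₀ u₂ u₂ := ⟨_, rfl⟩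
    obtain ⟨u, huDef⟩ : ∃ u : Fin 4 → ℝ, u = u₂ + (-(μ/2)) • s₀ := ⟨_, rfl⟩
    have hsu : φ₀ s₀ u = 1 := by rw [huDef, hra, hrs, h2, hiso]; ring
    have hJss : φ₀ (J₀ s₀) s₀ = 0 := by
      rw [h₀.phi_symm]; exact hselfJ s₀
    have hJsu : φ₀ (J₀ s₀) u = 0 := by rw [huDef, hra, hrs, h3, hJss]; ring
    have hsJu : φ₀ s₀ (J₀ u) = 0 := by have := hJl s₀ u; linarith
    have hu₂s : φ₀ u₂ s₀ = 1 := by rw [h₀.phi_symm]; exact h2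
    have huu : φ₀ u u = 0 := by
      rw [huDef, h₀.phi_add_left, h₀.phi_smul_left, hra, hra, hrs, hrs,
        h2, hiso, hu₂s, ← hμDef]
      ring
    have hs : s₀ = ((1:ℝ)^2) • s₀ + ((1:ℝ)^2*0) • u := by
      norm_num
    have := master h₀ s₀ s₀ u 0 1 one_ne_zero hiso huu hsu hsJu hs
    rw [brT0_eq_brTal0]
    exact this
  · intro h
    exact signcase 1 (Or.inl rfl) (by rw [one_mul]; exact h)
  · intro h
    exact signcase (-1) (Or.inr rfl) (by nlinarith)
  · -- abelian vs brT0
    rintro ⟨ψ, hbr, -, -⟩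
    have h1 := hbr (ψ.symm ![1,0,0,0,0,0,0,0]) (ψ.symm ![0,1,0,0,0,0,0,0])
    rw [ψ.apply_symm_apply, ψ.apply_symm_apply] at h1
    simpa [brT0, vec8_5', vec8_6', vec8_7'] using congrFun h1 2
  · rintro ⟨ψ, hbr, -, -⟩
    have h1 := hbr (ψ.symm ![1,0,0,0,0,0,0,0]) (ψ.symm ![0,1,0,0,0,0,0,0])
    rw [ψ.apply_symm_apply, ψ.apply_symm_apply] at h1
    simpa [brTal, vec8_5', vec8_6', vec8_7'] using congrFun h1 2
  · rintro ⟨ψ, hbr, -, -⟩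
    have h1 := hbr (ψ.symm ![1,0,0,0,0,0,0,0]) (ψ.symm ![0,1,0,0,0,0,0,0])
    rw [ψ.apply_symm_apply, ψ.apply_symm_apply] at h1
    simpa [brTal, vec8_5', vec8_6', vec8_7'] using congrFun h1 2
  · -- brT0 vs brTal 1
    rintro ⟨ψ, hbr, -, hphi⟩
    set x := ψ.symm ![1,0,0,0,0,0,0,0] with hx
    set y := ψ.symm ![0,1,0,0,0,0,0,0] with hy
    have h1 := hbr x y
    rw [hx, hy, ψ.apply_symm_apply, ψ.apply_symm_apply] at h1
    have h2 := hphi (brT0 x y) (brT0 x y)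
    rw [h1, phi8_brT0, phi8_brTal] at h2
    norm_num [vec8_5', vec8_6', vec8_7'] at h2
  · rintro ⟨ψ, hbr, -, hphi⟩
    set x := ψ.symm ![1,0,0,0,0,0,0,0] with hx
    set y := ψ.symm ![0,1,0,0,0,0,0,0] with hy
    have h1 := hbr x y
    rw [hx, hy, ψ.apply_symm_apply, ψ.apply_symm_apply] at h1
    have h2 := hphi (brT0 x y) (brT0 x y)
    rw [h1, phi8_brT0, phi8_brTal] at h2
    norm_num [vec8_5', vec8_6', vec8_7'] at h2
  · -- brTal 1 vs brTal (-1)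
    rintro ⟨ψ, hbr, -, hphi⟩
    set x := ψ.symm ![1,0,0,0,0,0,0,0] with hx
    set y := ψ.symm ![0,1,0,0,0,0,0,0] with hy
    have h1 := hbr x y
    rw [hx, hy, ψ.apply_symm_apply, ψ.apply_symm_apply] at h1
    have h2 := hphi (brTal 1 x y) (brTal 1 x y)
    rw [h1, phi8_brTal, phi8_brTal] at h2
    have hsq := sq_nonneg (x 0 * y 1 - x 1 * y 0)
    norm_num [vec8_5', vec8_6', vec8_7'] at h2
    nlinarith [h2, hsq]
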